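/- For a proper closed ρ-weakly convex function, the error bound with constant μ_e > 0 over [f ≤ f⋆ + ν] implies the PL inequality μ_p·(f(x) − f⋆) ≤ dist²(0, ∂̂f(x)) over the same sublevel set, with μ_p = 2/(2μ_e + ρμ_e²). -/

import Mathlib

open Metric Set Filter

local notation "⟪" x ", " y "⟫_ℝ" => @inner ℝ _ _ x y

noncomputable section

abbrev En (n : ℕ) := EuclideanSpace ℝ (Fin n)

def frechetSubdiff {n : ℕ} (f : En n → ℝ) (x : En n) : Set (En n) :=
  {s | ∀ ε > 0, ∀ᶠ y in nhds x, f x + ⟪s, y - x⟫_ℝ - ε * ‖y - x‖ ≤ f y}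

def convexSubdiff {n : ℕ} (f : En n → ℝ) (x : En n) : Set (En n) :=
  {g | ∀ y, f x + ⟪g, y - x⟫_ℝ ≤ f y}

/-- For convex F, a Fréchet subgradient is a convex subgradient. -/
lemma frechet_subset_convex {n : ℕ} (F : En n → ℝ)
    (hF : ConvexOn ℝ Set.univ F) {x v : En n}
    (hv : v ∈ frechetSubdiff F x) : v ∈ convexSubdiff F x := by
  intro y
  by_cases hxy : y = x
  · simp [hxy]
  have hny : 0 < ‖y - x‖ := norm_pos_iff.2 (sub_ne_zero.2 hxy)
  have key : ∀ ε > 0, ⟪v, y - x⟫_ℝ ≤ F y - F x + ε * ‖y - x‖ := by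
    intro ε hε
    have hzt : Filter.Tendsto (fun t : ℝ => x + t • (y - x)) (nhdsWithin 0 (Set.Ioi 0)) (nhds x) := by
      have hc : Continuous (fun t : ℝ => x + t • (y - x)) := by continuity
      have := hc.tendsto 0
      simpa using this.mono_left nhdsWithin_le_nhds
    have hev := (hv ε hε)
    have hev2 : ∀ᶠ t : ℝ in nhdsWithin 0 (Set.Ioi 0),
        F x + ⟪v, (x + t • (y - x)) - x⟫_ℝ - ε * ‖(x + t • (y - x)) - x‖ ≤ F (x + t • (y - x)) :=
      hzt.eventually hev
    have hev3 : ∀ᶠ t : ℝ in nhdsWithin 0 (Set.Ioi 0), t ∈ Set.Ioo (0:ℝ) 1 := by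
      have : Set.Ioo (0:ℝ) 1 ∈ nhdsWithin 0 (Set.Ioi 0) := by
        apply mem_nhdsWithin.2
        exact ⟨Set.Iio 1, isOpen_Iio, by norm_num, fun t ht => ⟨ht.2, ht.1⟩⟩
      exact this
    obtain ⟨t, ht1, ht2⟩ := (hev2.and hev3).exists
    obtain ⟨ht0, ht1'⟩ := ht2
    have hconv := hF.2 (Set.mem_univ x) (Set.mem_univ y)
      (by linarith : (0:ℝ) ≤ 1 - t) (le_of_lt ht0) (by ring)
    have hzeq : x + t • (y - x) = (1 - t) • x + t • y := by
      module
    have harg : (x + t • (y - x)) - x = t • (y - x) := by abel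
    have hinner : ⟪v, (x + t • (y - x)) - x⟫_ℝ = t * ⟪v, y - x⟫_ℝ := by
      rw [harg, real_inner_smul_right]
    have hnorm : ‖(x + t • (y - x)) - x‖ = t * ‖y - x‖ := by
      rw [harg, norm_smul, Real.norm_eq_abs, abs_of_pos ht0]
    rw [hinner, hnorm] at ht1
    rw [hzeq] at ht1
    have := ht1.trans hconv
    have hineq : t * (⟪v, y - x⟫_ℝ - ε * ‖y - x‖) ≤ t * (F y - F x) := by
      simp only [smul_eq_mul] at this
      nlinarith
    have := (mul_le_mul_iff_right₀ ht0).1 hineq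
    linarith
  -- let ε → 0
  have : ⟪v, y - x⟫_ℝ ≤ F y - F x := by
    refine le_of_forall_pos_le_add fun δ hδ => ?_
    have := key (δ / ‖y - x‖) (div_pos hδ hny)
    have heq : δ / ‖y - x‖ * ‖y - x‖ = δ := div_mul_cancel₀ δ (ne_of_gt hny)
    linarith [this, heq.le]
  linarith

/-- Weakly convex subgradient inequality. -/
lemma weakly_convex_subgrad {n : ℕ} (f : En n → ℝ) (ρ : ℝ) (hρ : 0 ≤ ρ)
    (hwc : ConvexOn ℝ Set.univ (fun x => f x + ρ / 2 * ‖x‖ ^ 2))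
    {x v : En n} (hv : v ∈ frechetSubdiff f x) :
    ∀ y, f x + ⟪v, y - x⟫_ℝ - ρ / 2 * ‖y - x‖ ^ 2 ≤ f y := by
  set F : En n → ℝ := fun z => f z + ρ / 2 * ‖z‖ ^ 2 with hFdef
  have hvF : (v + ρ • x) ∈ frechetSubdiff F x := by
    intro ε hε
    filter_upwards [hv ε hε] with z hz
    have hexp : ρ / 2 * ‖z‖ ^ 2 - ρ / 2 * ‖x‖ ^ 2 - ρ * ⟪x, z - x⟫_ℝ = ρ / 2 * ‖z - x‖ ^ 2 := by
      have h1 : ‖z - x‖ ^ 2 = ‖z‖ ^ 2 - 2 * ⟪z, x⟫_ℝ + ‖x‖ ^ 2 := norm_sub_sq_real z x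
      have h2 : ⟪x, z - x⟫_ℝ = ⟪z, x⟫_ℝ - ‖x‖ ^ 2 := by
        rw [inner_sub_right, real_inner_comm, real_inner_self_eq_norm_sq]
      rw [h1, h2]; ring
    have hinner : ⟪v + ρ • x, z - x⟫_ℝ = ⟪v, z - x⟫_ℝ + ρ * ⟪x, z - x⟫_ℝ := by
      rw [inner_add_left, real_inner_smul_left]
    simp only [hFdef]
    rw [hinner]
    have := mul_nonneg hρ (sq_nonneg ‖z - x‖)
    linarith
  have hcv := frechet_subset_convex F hwc hvF
  intro y
  have := hcv y
  simp only [hFdef] at this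
  have hinner : ⟪v + ρ • x, y - x⟫_ℝ = ⟪v, y - x⟫_ℝ + ρ * ⟪x, y - x⟫_ℝ := by
    rw [inner_add_left, real_inner_smul_left]
  have hexp : ρ / 2 * ‖y‖ ^ 2 - ρ / 2 * ‖x‖ ^ 2 - ρ * ⟪x, y - x⟫_ℝ = ρ / 2 * ‖y - x‖ ^ 2 := by
    have h1 : ‖y - x‖ ^ 2 = ‖y‖ ^ 2 - 2 * ⟪y, x⟫_ℝ + ‖x‖ ^ 2 := norm_sub_sq_real y x
    have h2 : ⟪x, y - x⟫_ℝ = ⟪y, x⟫_ℝ - ‖x‖ ^ 2 := by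
      rw [inner_sub_right, real_inner_comm, real_inner_self_eq_norm_sq]
    rw [h1, h2]; ring
  rw [hinner] at this
  linarith

/-- For a proper closed ρ-weakly convex f, the error bound with μ_e > 0
over [f ≤ f⋆ + ν] implies the PL inequality there with μ_p = 2/(2μ_e + ρμ_e²). -/
theorem eb_implies_pl {n : ℕ} (f : En n → ℝ) (ρ ν μe fstar : ℝ)
    (hρ : 0 ≤ ρ) (hν : 0 < ν) (hμe : 0 < μe)
    (hlsc : LowerSemicontinuous f)
    (hwc : ConvexOn ℝ Set.univ (fun x => f x + ρ / 2 * ‖x‖ ^ 2))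
    (hlb : ∀ y, fstar ≤ f y)
    (S : Set (En n)) (hS : S = {x | f x = fstar}) (hne : S.Nonempty)
    (hEB : ∀ x ∈ {z : En n | f z ≤ fstar + ν},
      infDist x S ≤ μe * infDist (0 : En n) (frechetSubdiff f x)) :
    ∀ x ∈ {z : En n | f z ≤ fstar + ν},
      (2 / (2 * μe + ρ * μe ^ 2)) * (f x - fstar)
        ≤ (infDist (0 : En n) (frechetSubdiff f x)) ^ 2 := by
  intro x hx
  set g := infDist (0 : En n) (frechetSubdiff f x) with hg
  have hg0 : 0 ≤ g := infDist_nonneg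
  have hD : 0 < 2 * μe + ρ * μe ^ 2 := by nlinarith
  have hSclosed : IsClosed S := by
    have : S = f ⁻¹' Set.Iic fstar := by
      rw [hS]; ext z
      simp only [Set.mem_setOf_eq, Set.mem_preimage, Set.mem_Iic]
      exact ⟨fun h => h.le, fun h => le_antisymm h (hlb z)⟩
    rw [this]
    exact hlsc.isClosed_preimage fstar
  -- Key claim
  have key : f x - fstar ≤ (μe + ρ * μe ^ 2 / 2) * g ^ 2 := by
    rcases Set.eq_empty_or_nonempty (frechetSubdiff f x) with hemp | hnemp
    · have hg0' : g = 0 := by rw [hg, hemp, infDist_empty]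
      have hd0 : infDist x S ≤ 0 := by
        have := hEB x hx; rw [← hg, hg0'] at this; linarith
      have hxS : x ∈ S := by
        have h0 : infDist x S = 0 := le_antisymm hd0 infDist_nonneg
        have := (mem_closure_iff_infDist_zero hne).2 h0
        rwa [hSclosed.closure_eq] at this
      rw [hS] at hxS
      simp only [Set.mem_setOf_eq] at hxS
      rw [hxS, hg0']
      simp
    · have hstep : ∀ ε > 0, f x - fstar ≤ (g + ε) * (μe * g + ε) + ρ / 2 * (μe * g + ε) ^ 2 := by
        intro ε hε
        have hlt : infDist (0 : En n) (frechetSubdiff f x) < g + ε := by rw [← hg]; linarith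
        obtain ⟨v, hvmem, hvd⟩ := (infDist_lt_iff hnemp).1 hlt
        have hvnorm : ‖v‖ < g + ε := by rwa [dist_zero_left] at hvd
        have hdEB : infDist x S ≤ μe * g := hEB x hx
        have hlt2 : infDist x S < μe * g + ε := by linarith
        obtain ⟨y, hymem, hyd⟩ := (infDist_lt_iff hne).1 hlt2
        have hyx : ‖y - x‖ < μe * g + ε := by rwa [dist_comm, dist_eq_norm] at hyd
        have hfy : f y = fstar := by rw [hS] at hymem; exact hymem
        have hsub := weakly_convex_subgrad f ρ hρ hwc hvmem y
        have hcs : -⟪v, y - x⟫_ℝ ≤ ‖v‖ * ‖y - x‖ := by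
          have := abs_real_inner_le_norm v (y - x)
          have := neg_abs_le (⟪v, y - x⟫_ℝ)
          linarith [abs_real_inner_le_norm v (y - x)]
        have hn0 : 0 ≤ ‖y - x‖ := norm_nonneg _
        have hv0 : 0 ≤ ‖v‖ := norm_nonneg _
        have h1 : ‖v‖ * ‖y - x‖ ≤ (g + ε) * (μe * g + ε) :=
          mul_le_mul hvnorm.le hyx.le hn0 (by linarith)
        have h2 : ‖y - x‖ ^ 2 ≤ (μe * g + ε) ^ 2 := pow_le_pow_left₀ hn0 hyx.le 2
        have h3 : ρ / 2 * ‖y - x‖ ^ 2 ≤ ρ / 2 * (μe * g + ε) ^ 2 :=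
          mul_le_mul_of_nonneg_left h2 (by linarith)
        linarith
      -- take limit ε → 0⁺
      have hlim : Filter.Tendsto (fun ε : ℝ => (g + ε) * (μe * g + ε) + ρ / 2 * (μe * g + ε) ^ 2)
          (nhdsWithin 0 (Set.Ioi 0)) (nhds ((μe + ρ * μe ^ 2 / 2) * g ^ 2)) := by
        have hc : Continuous (fun ε : ℝ => (g + ε) * (μe * g + ε) + ρ / 2 * (μe * g + ε) ^ 2) := by
          continuity
        have := hc.tendsto 0
        have heq : (g + 0) * (μe * g + 0) + ρ / 2 * (μe * g + 0) ^ 2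
            = (μe + ρ * μe ^ 2 / 2) * g ^ 2 := by ring
        rw [heq] at this
        exact this.mono_left nhdsWithin_le_nhds
      refine ge_of_tendsto hlim ?_
      filter_upwards [self_mem_nhdsWithin] with ε hε
      exact hstep ε hε
  -- conclude
  have hfx : fstar ≤ f x := hlb x
  rw [div_mul_eq_mul_div, div_le_iff₀ hD]
  nlinarith
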